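/- Let 𝒮 = {S^𝐢 : 𝐢 ∈ [d₁]×···×[dₙ]} be a generalized nD-ordered family and 𝒮^j = {∪_{𝐢: 𝐢_j = k} S^𝐢}_{k=1}^{d_j} its j-th projection family. Then the edge set of the conflict graph of 𝒮 equals the union over j ∈ {1,...,n} of the edge sets of the conflict graphs of the 𝒮^j: a pair {u,w} is not contained in any S^𝐢 if and only if there exists j such that {u,w} is not contained in any member of 𝒮^j. -/
import Mathlib


/-- `v` lies in the grid `[d₁] × ⋯ × [dₙ]`. -/
def InGrid (n : ℕ) (dv : Fin n → ℕ) (v : Fin n → ℕ) : Prop :=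
  ∀ j, 1 ≤ v j ∧ v j ≤ dv j

/-- The ℓ¹ distance between two grid indices. -/
def l1dist (n : ℕ) (a b : Fin n → ℕ) : ℕ :=
  ∑ j : Fin n, ((a j : ℤ) - (b j : ℤ)).natAbs

/-- The `j`-th 1D projection family: `T^j_k = ∪ {S 𝐢 : 𝐢_j = k}`. -/
def projPiece {α : Type*} (n : ℕ) (dv : Fin n → ℕ) (S : (Fin n → ℕ) → Set α)
    (j : Fin n) (k : ℕ) : Set α :=
  {a | ∃ i, InGrid n dv i ∧ i j = k ∧ a ∈ S i}

/-- A point lying coordinatewise between two others is on an ℓ¹ geodesic. -/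
lemma geodesic_aux (n : ℕ) (i i' v : Fin n → ℕ)
    (h : ∀ m, min (i m) (i' m) ≤ v m ∧ v m ≤ max (i m) (i' m)) :
    l1dist n i v + l1dist n v i' = l1dist n i i' := by
  unfold l1dist
  rw [← Finset.sum_add_distrib]
  refine Finset.sum_congr rfl fun m _ => ?_
  have := h m
  omega

/-- A predicate closed under taking coordinatewise boxes contains the "diagonal
mix" `fun j => a j j` of a family of its members. -/
lemma box_fill_aux (n : ℕ) {P : (Fin n → ℕ) → Prop}
    (hclose : ∀ i i' v, P i → P i' →
      (∀ m, min (i m) (i' m) ≤ v m ∧ v m ≤ max (i m) (i' m)) → P v)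
    (a : Fin n → (Fin n → ℕ)) (ha : ∀ j, P (a j))
    (i0 : Fin n → ℕ) (hi0 : P i0) : P (fun j => a j j) := by
  have key : ∀ m, m ≤ n → ∃ q, P q ∧ ∀ j : Fin n, (j : ℕ) < m → q j = a j j := by
    intro m hm
    induction m with
    | zero => exact ⟨i0, hi0, fun j hj => absurd hj (by omega)⟩
    | succ m ih =>
      obtain ⟨q, hq, hqa⟩ := ih (by omega)
      have hmn : m < n := by omega
      set jm : Fin n := ⟨m, hmn⟩ with hjm
      refine ⟨fun j => if j = jm then a jm jm else q j, ?_, ?_⟩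
      · refine hclose q (a jm) _ hq (ha jm) fun l => ?_
        by_cases hl : l = jm <;> simp [hl] <;> omega
      · intro j hj
        by_cases hl : j = jm
        · subst hl; simp
        · have : (j : ℕ) < m := by
            rcases lt_or_eq_of_le (Nat.lt_succ_iff.mp hj) with h' | h'
            · exact h'
            · exact absurd (Fin.ext h' : j = jm) hl
          simp only [if_neg hl]
          exact hqa j this
  obtain ⟨q, hq, hqa⟩ := key n le_rfl
  have : q = fun j => a j j := funext fun j => hqa j j.isLt
  exact this ▸ hq

/-- For a generalized nD-ordered family, the edge set of the conflict graph equals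
the union of the edge sets of the conflict graphs of the 1D projection families:
a pair `{u, w}` of distinct ground-set elements is contained in no `S 𝐢` iff for some
coordinate `j` it is contained in no member `T^j_k` of the projection family. -/
theorem conflict_graph_eq_union_proj {α : Type*} (n : ℕ) (dv : Fin n → ℕ)
    (S : (Fin n → ℕ) → Set α)
    (h1 : ∀ i j, InGrid n dv i → InGrid n dv j →
      (∃ k, 2 ≤ ((i k : ℤ) - (j k : ℤ)).natAbs) → S i ∩ S j = ∅)
    (h2 : ∀ i j v, InGrid n dv i → InGrid n dv j → InGrid n dv v →
      l1dist n i v + l1dist n v j = l1dist n i j → S i ∩ S j ⊆ S v)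
    (u w : α) (huw : u ≠ w)
    (hu : ∃ i, InGrid n dv i ∧ u ∈ S i) (hw : ∃ i, InGrid n dv i ∧ w ∈ S i) :
    (∀ i, InGrid n dv i → ¬ (u ∈ S i ∧ w ∈ S i)) ↔
      ∃ j : Fin n, ∀ k, 1 ≤ k → k ≤ dv j →
        ¬ (u ∈ projPiece n dv S j k ∧ w ∈ projPiece n dv S j k) := by
  constructor
  · -- forward direction, by contraposition
    intro hL
    by_contra hR
    push_neg at hR
    -- for each coordinate j choose k j and witnesses
    choose k hk1 hk2 hmem using hR
    have hmemu : ∀ j, u ∈ projPiece n dv S j (k j) := fun j => (hmem j).1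
    have hmemw : ∀ j, w ∈ projPiece n dv S j (k j) := fun j => (hmem j).2
    choose a hagrid hak hau using hmemu
    choose b hbgrid hbk hbw using hmemw
    -- box closure for u and for w
    have hcloseU : ∀ i i' v, (InGrid n dv i ∧ u ∈ S i) → (InGrid n dv i' ∧ u ∈ S i') →
        (∀ m, min (i m) (i' m) ≤ v m ∧ v m ≤ max (i m) (i' m)) →
        (InGrid n dv v ∧ u ∈ S v) := by
      intro i i' v hi hi' hv
      have hvg : InGrid n dv v := by
        intro m
        have h1' := (hi.1 m); have h2' := (hi'.1 m); have h3' := hv m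
        omega
      exact ⟨hvg, h2 i i' v hi.1 hi'.1 hvg (geodesic_aux n i i' v hv) ⟨hi.2, hi'.2⟩⟩
    have hcloseW : ∀ i i' v, (InGrid n dv i ∧ w ∈ S i) → (InGrid n dv i' ∧ w ∈ S i') →
        (∀ m, min (i m) (i' m) ≤ v m ∧ v m ≤ max (i m) (i' m)) →
        (InGrid n dv v ∧ w ∈ S v) := by
      intro i i' v hi hi' hv
      have hvg : InGrid n dv v := by
        intro m
        have h1' := (hi.1 m); have h2' := (hi'.1 m); have h3' := hv m
        omega
      exact ⟨hvg, h2 i i' v hi.1 hi'.1 hvg (geodesic_aux n i i' v hv) ⟨hi.2, hi'.2⟩⟩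
    obtain ⟨iu, hiu⟩ := hu
    obtain ⟨iw, hiw⟩ := hw
    have hA : InGrid n dv (fun j => a j j) ∧ u ∈ S (fun j => a j j) :=
      box_fill_aux n hcloseU a (fun j => ⟨hagrid j, hau j⟩) iu hiu
    have hB : InGrid n dv (fun j => b j j) ∧ w ∈ S (fun j => b j j) :=
      box_fill_aux n hcloseW b (fun j => ⟨hbgrid j, hbw j⟩) iw hiw
    have hab : (fun j => a j j) = (fun j => b j j) :=
      funext fun j => by rw [hak j, hbk j]
    exact hL (fun j => a j j) hA.1 ⟨hA.2, hab ▸ hB.2⟩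
  · -- easy direction
    rintro ⟨j, hj⟩ i hig ⟨hui, hwi⟩
    exact hj (i j) (hig j).1 (hig j).2 ⟨⟨i, hig, rfl, hui⟩, ⟨i, hig, rfl, hwi⟩⟩
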